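/- Let (P_t)_{t≥0} be a Markov semigroup on L²(μ) with invariant probability measure μ and generator ℒ with domain 𝒟(ℒ). Assume (H2'): there exist constants C ≥ 1 and λ_V > 0 such that Var_μ(P_t f) ≤ C e^{−2λ_V t} Var_μ(f) for all f ∈ L²(μ) and t ≥ 0. Then the iterated Poincaré inequality (H2) holds with constant λ_I = C^{−1/2} λ_V: for every f ∈ 𝒟(ℒ) with μ(f) = 0 one has ‖ℒf‖_{L²(μ)} ≥ C^{−1/2} λ_V ‖f‖_{L²(μ)}. -/

import Mathlib

open MeasureTheory ProbabilityTheory Filter ENNReal Topology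

noncomputable section

/-- The transition semigroup acting on functions: `P_t f (x) = E^x [f(X_t)]`. -/
def Pop {S : Type*} [MeasurableSpace S] (κ : ℝ → Kernel S S) (t : ℝ) (f : S → ℝ) : S → ℝ :=
  fun x => ∫ y, f y ∂(κ t x)

/-- `g = ℒ f` where `ℒ` is the infinitesimal generator of the semigroup in `L²(μ)`;
this also expresses that `f` belongs to the domain `𝒟(ℒ)`. -/
def IsGenerated {S : Type*} [MeasurableSpace S] (κ : ℝ → Kernel S S) (μ : Measure S)
    (f g : S → ℝ) : Prop :=
  MemLp f 2 μ ∧ MemLp g 2 μ ∧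
    Tendsto (fun t : ℝ => eLpNorm (fun x => (Pop κ t f x - f x) / t - g x) 2 μ)
      (𝓝[>] (0:ℝ)) (𝓝 0)

/-- The optimal transport cost `𝒯_p(ν₀, ν₁) = inf_{π ∈ 𝒞(ν₀,ν₁)} ∫ |x-y|^p dπ(x,y)`. -/
def Tcost {d : ℕ} (p : ℝ) (ν₀ ν₁ : Measure (EuclideanSpace ℝ (Fin d))) : ℝ≥0∞ :=
  ⨅ (π : Measure (EuclideanSpace ℝ (Fin d) × EuclideanSpace ℝ (Fin d)))
    (_ : π.map Prod.fst = ν₀) (_ : π.map Prod.snd = ν₁),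
      ∫⁻ z, ENNReal.ofReal (‖z.1 - z.2‖ ^ p) ∂π

namespace PoincareAux

set_option linter.unusedSectionVars false

variable {S : Type*} [MeasurableSpace S]

/-! ### Cauchy–Schwarz facts in `L²(μ)` -/

lemma abs_integral_mul_le {μ : Measure S} {u v : S → ℝ}
    (hu : MemLp u 2 μ) (hv : MemLp v 2 μ) :
    |∫ x, u x * v x ∂μ| ≤ (eLpNorm u 2 μ).toReal * (eLpNorm v 2 μ).toReal := by
  have h1 : ∫ x, u x * v x ∂μ = (inner ℝ (hu.toLp u) (hv.toLp v) : ℝ) := by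
    rw [L2.inner_def]
    apply integral_congr_ae
    filter_upwards [hu.coeFn_toLp, hv.coeFn_toLp] with x h1 h2
    simp [h1, h2, RCLike.inner_apply, mul_comm]
  rw [h1, ← Lp.norm_toLp u hu, ← Lp.norm_toLp v hv]
  exact abs_real_inner_le_norm _ _

lemma integral_sq_eq {μ : Measure S} {u : S → ℝ} (hu : MemLp u 2 μ) :
    ∫ x, u x ^ 2 ∂μ = (eLpNorm u 2 μ).toReal ^ 2 := by
  have h1 : ∫ x, u x ^ 2 ∂μ = (inner ℝ (hu.toLp u) (hu.toLp u) : ℝ) := by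
    rw [L2.inner_def]
    apply integral_congr_ae
    filter_upwards [hu.coeFn_toLp] with x h1
    simp [h1, RCLike.inner_apply, sq]
  rw [h1, ← Lp.norm_toLp u hu, real_inner_self_eq_norm_sq]

/-! ### Measurability and integrability facts for the semigroup -/

lemma integral_bind' (ν : Measure S) [IsProbabilityMeasure ν] (k : Kernel S S) [IsMarkovKernel k]
    {f : S → ℝ} (hfm : StronglyMeasurable f) (hfi : Integrable f (ν.bind k)) :
    ∫ y, f y ∂(ν.bind k) = ∫ x, ∫ y, f y ∂(k x) ∂ν := by
  have hb : ν.bind k = (ν ⊗ₘ k).map Prod.snd := by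
    ext s hs
    rw [Measure.bind_apply hs (Kernel.measurable _).aemeasurable, Measure.map_apply measurable_snd hs,
      Measure.compProd_apply (measurable_snd hs)]
    rfl
  rw [hb, integral_map measurable_snd.aemeasurable hfm.aestronglyMeasurable]
  rw [hb] at hfi
  exact Measure.integral_compProd
    ((integrable_map_measure hfm.aestronglyMeasurable measurable_snd.aemeasurable).mp hfi)

lemma pop_sm (κ : ℝ → Kernel S S) (t : ℝ) [IsMarkovKernel (κ t)] {f : S → ℝ}
    (hf : StronglyMeasurable f) : StronglyMeasurable (Pop κ t f) := by
  have : StronglyMeasurable (Function.uncurry fun (_ : S) (y : S) => f y) :=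
    hf.comp_measurable measurable_snd
  exact this.integral_kernel_prod_right (κ := κ t)

variable {κ : ℝ → Kernel S S} {μ : Measure S} [IsProbabilityMeasure μ]

lemma sq_lintegral_ne_top {ν : Measure S} {f : S → ℝ} (hfi : MemLp f 2 ν) :
    ∫⁻ y, (‖f y‖₊ : ℝ≥0∞) ^ (2:ℝ) ∂ν ≠ ∞ := by
  have := hfi.2
  rw [eLpNorm_eq_lintegral_rpow_enorm_toReal (by norm_num) (by norm_num)] at this
  have h2 : (2 : ℝ≥0∞).toReal = 2 := by norm_num
  rw [h2] at this
  intro h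
  rw [show (∫⁻ x, ‖f x‖ₑ ^ (2:ℝ) ∂ν) = ∞ from h] at this
  simp [ENNReal.top_rpow_of_pos] at this

lemma memL2_of_sq_lintegral {ν : Measure S} {f : S → ℝ} (hf : StronglyMeasurable f)
    (h : ∫⁻ y, (‖f y‖₊ : ℝ≥0∞) ^ (2:ℝ) ∂ν < ∞) : MemLp f 2 ν := by
  refine ⟨hf.aestronglyMeasurable, ?_⟩
  rw [eLpNorm_eq_lintegral_rpow_enorm_toReal (by norm_num) (by norm_num)]
  have h2 : (2 : ℝ≥0∞).toReal = 2 := by norm_num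
  rw [h2]
  exact ENNReal.rpow_lt_top_of_nonneg (by norm_num) h.ne

lemma ae_lintegral_kernel_lt_top {t : ℝ} [IsMarkovKernel (κ t)] (hinvt : μ.bind (κ t) = μ)
    {G : S → ℝ≥0∞} (hG : Measurable G) (h : ∫⁻ y, G y ∂μ ≠ ∞) :
    ∀ᵐ x ∂μ, ∫⁻ y, G y ∂(κ t x) < ∞ := by
  have hm : Measurable fun x => ∫⁻ y, G y ∂(κ t x) :=
    Measurable.lintegral_kernel_prod_right (f := fun _ y => G y) (hG.comp measurable_snd)
  refine ae_lt_top hm ?_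
  rw [← Measure.lintegral_bind (Kernel.measurable _).aemeasurable hG.aemeasurable, hinvt]
  exact h

lemma ae_memL2_kernel {t : ℝ} [IsMarkovKernel (κ t)] (hinvt : μ.bind (κ t) = μ)
    {f : S → ℝ} (hf : StronglyMeasurable f) (hfi : MemLp f 2 μ) :
    ∀ᵐ x ∂μ, MemLp f 2 (κ t x) := by
  have hG : Measurable fun y => ((‖f y‖₊ : ℝ≥0∞)) ^ (2 : ℝ) :=
    (hf.measurable.nnnorm.coe_nnreal_ennreal).pow_const _
  filter_upwards [ae_lintegral_kernel_lt_top hinvt hG (sq_lintegral_ne_top hfi)] with x hx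
  exact memL2_of_sq_lintegral hf hx

lemma ae_integrable_kernel {t : ℝ} [IsMarkovKernel (κ t)] (hinvt : μ.bind (κ t) = μ)
    {f : S → ℝ} (hf : StronglyMeasurable f) (hfi : MemLp f 2 μ) :
    ∀ᵐ x ∂μ, Integrable f (κ t x) := by
  filter_upwards [ae_memL2_kernel hinvt hf hfi] with x hx
  exact hx.integrable (by norm_num)

lemma pop_eLpNorm_le {t : ℝ} [IsMarkovKernel (κ t)] (hinvt : μ.bind (κ t) = μ)
    {f : S → ℝ} (hf : StronglyMeasurable f) :
    eLpNorm (Pop κ t f) 2 μ ≤ eLpNorm f 2 μ := by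
  rw [eLpNorm_eq_lintegral_rpow_enorm_toReal (by norm_num) (by norm_num),
    eLpNorm_eq_lintegral_rpow_enorm_toReal (by norm_num) (by norm_num)]
  have htR : (2 : ℝ≥0∞).toReal = 2 := by norm_num
  rw [htR]
  refine ENNReal.rpow_le_rpow ?_ (by norm_num)
  have hG : Measurable fun y => ((‖f y‖₊ : ℝ≥0∞)) ^ (2 : ℝ) :=
    (hf.measurable.nnnorm.coe_nnreal_ennreal).pow_const _
  calc ∫⁻ x, (‖Pop κ t f x‖₊ : ℝ≥0∞) ^ (2:ℝ) ∂μ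
      ≤ ∫⁻ x, ∫⁻ y, (‖f y‖₊ : ℝ≥0∞) ^ (2:ℝ) ∂(κ t x) ∂μ := by
        refine lintegral_mono fun x => ?_
        have h1 : (‖Pop κ t f x‖₊ : ℝ≥0∞) ≤ ∫⁻ y, ‖f y‖₊ ∂(κ t x) :=
          enorm_integral_le_lintegral_enorm _
        have h2 : ∫⁻ y, (‖f y‖₊ : ℝ≥0∞) ∂(κ t x) ≤
            (∫⁻ y, (‖f y‖₊ : ℝ≥0∞) ^ (2:ℝ) ∂(κ t x)) ^ (1/2 : ℝ) := by
          have := eLpNorm_le_eLpNorm_of_exponent_le (μ := κ t x) (f := f)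
            (p := 1) (q := 2) (by norm_num) hf.aestronglyMeasurable
          rwa [eLpNorm_one_eq_lintegral_enorm,
            eLpNorm_eq_lintegral_rpow_enorm_toReal (by norm_num) (by norm_num), htR] at this
        calc (‖Pop κ t f x‖₊ : ℝ≥0∞) ^ (2:ℝ)
            ≤ ((∫⁻ y, (‖f y‖₊ : ℝ≥0∞) ^ (2:ℝ) ∂(κ t x)) ^ (1/2 : ℝ)) ^ (2:ℝ) :=
              ENNReal.rpow_le_rpow (h1.trans h2) (by norm_num)
          _ = ∫⁻ y, (‖f y‖₊ : ℝ≥0∞) ^ (2:ℝ) ∂(κ t x) := by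
              rw [← ENNReal.rpow_mul]; norm_num
    _ = ∫⁻ y, (‖f y‖₊ : ℝ≥0∞) ^ (2:ℝ) ∂μ := by
        rw [← Measure.lintegral_bind (Kernel.measurable _).aemeasurable hG.aemeasurable, hinvt]

lemma pop_memL2 {t : ℝ} [IsMarkovKernel (κ t)] (hinvt : μ.bind (κ t) = μ)
    {f : S → ℝ} (hf : StronglyMeasurable f) (hfi : MemLp f 2 μ) :
    MemLp (Pop κ t f) 2 μ :=
  ⟨(pop_sm κ t hf).aestronglyMeasurable, lt_of_le_of_lt (pop_eLpNorm_le hinvt hf) hfi.2⟩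

lemma pop_mean {t : ℝ} [IsMarkovKernel (κ t)] (hinvt : μ.bind (κ t) = μ)
    {f : S → ℝ} (hf : StronglyMeasurable f) (hfi : MemLp f 2 μ) :
    ∫ x, Pop κ t f x ∂μ = ∫ y, f y ∂μ := by
  have hint : Integrable f (μ.bind (κ t)) := by
    rw [hinvt]; exact hfi.integrable (by norm_num)
  have h := integral_bind' μ (κ t) hf hint
  rw [hinvt] at h
  exact h.symm

lemma pop_semigroup {s t : ℝ} [IsMarkovKernel (κ s)] [IsMarkovKernel (κ t)]
    [IsMarkovKernel (κ (s + t))]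
    (hst : ∀ x, κ (s + t) x = (κ s x).bind (κ t))
    (hinvst : μ.bind (κ (s + t)) = μ)
    {f : S → ℝ} (hf : StronglyMeasurable f) (hfi : MemLp f 2 μ) :
    Pop κ (s + t) f =ᵐ[μ] Pop κ s (Pop κ t f) := by
  filter_upwards [ae_integrable_kernel (t := s + t) hinvst hf hfi] with x hx
  show (∫ y, f y ∂(κ (s+t) x)) = ∫ y, Pop κ t f y ∂(κ s x)
  have hx' : Integrable f ((κ s x).bind (κ t)) := by rw [← hst x]; exact hx
  rw [show (κ (s+t) x : Measure S) = (κ s x).bind (κ t) from hst x]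
  exact integral_bind' (κ s x) (κ t) hf hx'

lemma pop_congr_ae {t : ℝ} [IsMarkovKernel (κ t)] (hinvt : μ.bind (κ t) = μ)
    {f g : S → ℝ} (h : f =ᵐ[μ] g) : Pop κ t f =ᵐ[μ] Pop κ t g := by
  obtain ⟨Z, hZsub, hZm, hZ0⟩ := exists_measurable_superset_of_null h
  have hbind : ∫⁻ x, (κ t x) Z ∂μ = 0 := by
    have := Measure.bind_apply hZm (Kernel.measurable (κ t)).aemeasurable (m := μ)
    rw [hinvt] at this
    rw [← this, hZ0]
  have hae : ∀ᵐ x ∂μ, (κ t x) Z = 0 := by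
    have hm : Measurable fun x => (κ t x) Z := Kernel.measurable_coe _ hZm
    rw [lintegral_eq_zero_iff hm] at hbind
    exact hbind
  filter_upwards [hae] with x hx
  refine integral_congr_ae ?_
  refine Filter.mem_of_superset (measure_eq_zero_iff_ae_notMem.mp hx) ?_
  intro y hy
  simp only [Set.mem_setOf_eq] at *
  by_contra hne
  exact hy (hZsub hne)

lemma pop_sub {t : ℝ} [IsMarkovKernel (κ t)] (hinvt : μ.bind (κ t) = μ)
    {u v : S → ℝ} (hu : StronglyMeasurable u) (hv : StronglyMeasurable v)
    (hui : MemLp u 2 μ) (hvi : MemLp v 2 μ) :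
    Pop κ t (u - v) =ᵐ[μ] Pop κ t u - Pop κ t v := by
  filter_upwards [ae_integrable_kernel hinvt hu hui, ae_integrable_kernel hinvt hv hvi]
    with x hxu hxv
  simpa [Pop] using integral_sub hxu hxv

lemma pop_add {t : ℝ} [IsMarkovKernel (κ t)] (hinvt : μ.bind (κ t) = μ)
    {u v : S → ℝ} (hu : StronglyMeasurable u) (hv : StronglyMeasurable v)
    (hui : MemLp u 2 μ) (hvi : MemLp v 2 μ) :
    Pop κ t (u + v) =ᵐ[μ] Pop κ t u + Pop κ t v := by
  filter_upwards [ae_integrable_kernel hinvt hu hui, ae_integrable_kernel hinvt hv hvi]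
    with x hxu hxv
  simpa [Pop] using integral_add hxu hxv

lemma pop_smul {t : ℝ} (c : ℝ) (u : S → ℝ) :
    Pop κ t (c • u) = c • Pop κ t u := by
  funext x
  simp [Pop, smul_eq_mul, MeasureTheory.integral_const_mul]


lemma integrable_mul_L2 {μ : Measure S} {u v : S → ℝ}
    (hu : MemLp u 2 μ) (hv : MemLp v 2 μ) : Integrable (fun x => u x * v x) μ := by
  have h := L2.integrable_inner (𝕜 := ℝ) (hu.toLp u) (hv.toLp v)
  refine h.congr ?_
  filter_upwards [hu.coeFn_toLp, hv.coeFn_toLp] with x h1 h2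
  simp [h1, h2, RCLike.inner_apply, mul_comm]

lemma N_add_le {μ : Measure S} {u v : S → ℝ} (hu : MemLp u 2 μ) (hv : MemLp v 2 μ) :
    (eLpNorm (fun x => u x + v x) 2 μ).toReal ≤
      (eLpNorm u 2 μ).toReal + (eLpNorm v 2 μ).toReal := by
  have h := eLpNorm_add_le hu.1 hv.1 (by norm_num : (1:ℝ≥0∞) ≤ 2)
  have h2 := ENNReal.toReal_mono (ENNReal.add_lt_top.mpr ⟨hu.2, hv.2⟩).ne h
  rwa [ENNReal.toReal_add hu.2.ne hv.2.ne] at h2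

lemma N_smul {μ : Measure S} (c : ℝ) (u : S → ℝ) :
    (eLpNorm (c • u) 2 μ).toReal = |c| * (eLpNorm u 2 μ).toReal := by
  rw [eLpNorm_const_smul, ENNReal.toReal_mul]
  simp [Real.norm_eq_abs]

lemma N_one : (eLpNorm (fun _ : S => (1:ℝ)) 2 μ).toReal = 1 := by
  rw [eLpNorm_const _ (by norm_num) (IsProbabilityMeasure.ne_zero μ)]
  simp


theorem core {S : Type*} [MeasurableSpace S] (κ : ℝ → Kernel S S)
    (hMark : ∀ t : ℝ, IsMarkovKernel (κ t))
    (hzero : ∀ x, κ 0 x = Measure.dirac x)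
    (hcomp : ∀ s t : ℝ, 0 ≤ s → 0 ≤ t → ∀ x, κ (s + t) x = (κ s x).bind (κ t))
    (μ : Measure S) [IsProbabilityMeasure μ]
    (hinv : ∀ t : ℝ, 0 ≤ t → μ.bind (κ t) = μ)
    (C lV : ℝ) (hC : 1 ≤ C) (hlV : 0 < lV)
    (H2' : ∀ u : S → ℝ, MemLp u 2 μ → ∀ t : ℝ, 0 ≤ t →
      ∫ x, (Pop κ t u x - ∫ y, Pop κ t u y ∂μ) ^ 2 ∂μ ≤
        C * Real.exp (-(2 * lV * t)) * ∫ x, (u x - ∫ y, u y ∂μ) ^ 2 ∂μ)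
    (f g : S → ℝ) (hfm : StronglyMeasurable f) (hgm : StronglyMeasurable g)
    (hf2 : MemLp f 2 μ) (hg2 : MemLp g 2 μ)
    (htend : Tendsto (fun t : ℝ => eLpNorm (fun x => (Pop κ t f x - f x) / t - g x) 2 μ)
      (𝓝[>] (0:ℝ)) (𝓝 0))
    (hmean : ∫ x, f x ∂μ = 0) :
    lV / Real.sqrt C * (eLpNorm f 2 μ).toReal ≤ (eLpNorm g 2 μ).toReal := by
  haveI hM : ∀ t : ℝ, IsMarkovKernel (κ t) := hMark
  set N : (S → ℝ) → ℝ := fun u => (eLpNorm u 2 μ).toReal with hNdef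
  have hN_nonneg : ∀ u, 0 ≤ N u := fun u => ENNReal.toReal_nonneg
  set D : ℝ → S → ℝ := fun s x => (Pop κ s f x - f x) / s - g x with hDdef
  set φ : ℝ → ℝ := fun t => ∫ x, Pop κ t f x * f x ∂μ with hφdef
  set ψ : ℝ → ℝ := fun t => ∫ x, Pop κ t g x * f x ∂μ with hψdef
  have hsqrtC : 0 < Real.sqrt C := Real.sqrt_pos.mpr (by linarith)
  -- basic L² facts
  have hP2 : ∀ (u : S → ℝ), StronglyMeasurable u → MemLp u 2 μ → ∀ t : ℝ, 0 ≤ t →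
      MemLp (Pop κ t u) 2 μ := fun u hum hu2 t ht => pop_memL2 (hinv t ht) hum hu2
  have hPN : ∀ (u : S → ℝ), StronglyMeasurable u → MemLp u 2 μ → ∀ t : ℝ, 0 ≤ t →
      N (Pop κ t u) ≤ N u := fun u hum hu2 t ht =>
    ENNReal.toReal_mono hu2.2.ne (pop_eLpNorm_le (hinv t ht) hum)
  -- D s is in L²
  have hD2 : ∀ s : ℝ, 0 < s → MemLp (D s) 2 μ := by
    intro s hs
    have h0 : MemLp (s⁻¹ • (Pop κ s f - f)) 2 μ :=
      ((hP2 f hfm hf2 s hs.le).sub hf2).const_smul s⁻¹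
    have he : (s⁻¹ • (Pop κ s f - f)) = fun x => (Pop κ s f x - f x) / s := by
      funext x; simp [div_eq_inv_mul]
    rw [he] at h0
    exact h0.sub hg2
  have hDm : ∀ s : ℝ, StronglyMeasurable (D s) := by
    intro s
    have h0 : StronglyMeasurable (s⁻¹ • (Pop κ s f - f)) :=
      ((pop_sm κ s hfm).sub hfm).const_smul s⁻¹
    have he : (s⁻¹ • (Pop κ s f - f)) = fun x => (Pop κ s f x - f x) / s := by
      funext x; simp [div_eq_inv_mul]
    rw [he] at h0
    exact h0.sub hgm
  -- ε s := N (D s) tends to 0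
  have hNε : Tendsto (fun s => N (D s)) (𝓝[>] (0:ℝ)) (𝓝 0) := by
    have := (ENNReal.tendsto_toReal (a := 0) (by simp)).comp htend
    rw [ENNReal.toReal_zero] at this
    exact this
  -- key pointwise identity
  have hD_eq : ∀ s : ℝ, 0 < s → ∀ x, Pop κ s f x - f x = s * (g x + D s x) := by
    intro s hs x
    simp only [hDdef]
    field_simp
    ring
  -- g has mean zero
  have hInt : ∀ u : S → ℝ, MemLp u 2 μ → Integrable u μ :=
    fun u hu => hu.integrable (by norm_num)
  have hgmean : ∫ x, g x ∂μ = 0 := by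
    have hDint : ∀ s : ℝ, 0 < s → ∫ x, D s x ∂μ = -∫ x, g x ∂μ := by
      intro s hs
      have hPf2 := hP2 f hfm hf2 s hs.le
      have hint1 : Integrable (fun x => (Pop κ s f x - f x) / s) μ :=
        ((hInt _ hPf2).sub (hInt f hf2)).div_const s
      have h1 : ∫ x, D s x ∂μ =
          (∫ x, (Pop κ s f x - f x) ∂μ) / s - ∫ x, g x ∂μ := by
        simp only [hDdef]
        rw [integral_sub hint1 (hInt g hg2), integral_div]
      have h2 : ∫ x, (Pop κ s f x - f x) ∂μ = 0 := by
        rw [integral_sub (hInt _ hPf2) (hInt f hf2),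
          pop_mean (hinv s hs.le) hfm hf2, sub_self]
      rw [h1, h2]
      simp
    have habs : ∀ᶠ s in 𝓝[>] (0:ℝ), |∫ x, g x ∂μ| ≤ N (D s) := by
      filter_upwards [eventually_mem_nhdsWithin] with s hs
      have h3 : |∫ x, D s x ∂μ| ≤ N (D s) * N (fun _ : S => (1:ℝ)) := by
        have := abs_integral_mul_le (hD2 s hs) (memLp_const (1:ℝ))
        simpa using this
      rw [hDint s hs, abs_neg] at h3
      have h4 : N (fun _ : S => (1:ℝ)) = 1 := N_one
      rw [h4, mul_one] at h3
      exact h3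
    have := ge_of_tendsto hNε habs
    have habs0 := abs_nonneg (∫ x, g x ∂μ)
    have : |∫ x, g x ∂μ| = 0 := le_antisymm this habs0
    exact abs_eq_zero.mp this
  -- variance decay in norm form
  have hdecay : ∀ (u : S → ℝ), StronglyMeasurable u → MemLp u 2 μ → (∫ x, u x ∂μ) = 0 →
      ∀ t : ℝ, 0 ≤ t → N (Pop κ t u) ≤ Real.sqrt C * Real.exp (-(lV * t)) * N u := by
    intro u hum hu2 hume t ht
    have h := H2' u hu2 t ht
    rw [pop_mean (hinv t ht) hum hu2, hume] at h
    simp only [sub_zero] at h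
    rw [integral_sq_eq (hP2 u hum hu2 t ht), integral_sq_eq hu2] at h
    have hexp : Real.exp (-(2*lV*t)) = Real.exp (-(lV*t))^2 := by
      rw [sq, ← Real.exp_add]
      ring_nf
    have key : N (Pop κ t u)^2 ≤ (Real.sqrt C * Real.exp (-(lV*t)) * N u)^2 := by
      rw [mul_pow, mul_pow, Real.sq_sqrt (by linarith : (0:ℝ) ≤ C), ← hexp]
      exact h
    have hrhs : 0 ≤ Real.sqrt C * Real.exp (-(lV*t)) * N u :=
      mul_nonneg (mul_nonneg hsqrtC.le (Real.exp_pos _).le) (hN_nonneg u)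
    calc N (Pop κ t u) = Real.sqrt (N (Pop κ t u)^2) := (Real.sqrt_sq (hN_nonneg _)).symm
      _ ≤ Real.sqrt ((Real.sqrt C * Real.exp (-(lV*t)) * N u)^2) := Real.sqrt_le_sqrt key
      _ = Real.sqrt C * Real.exp (-(lV*t)) * N u := Real.sqrt_sq hrhs
  -- difference identity
  have hId : ∀ v : ℝ, 0 ≤ v → ∀ s : ℝ, 0 < s →
      φ (v + s) - φ v = ∫ x, Pop κ v (fun y => Pop κ s f y - f y) x * f x ∂μ := by
    intro v hv s hs
    have hPsf2 := hP2 f hfm hf2 s hs.le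
    have hPsfm := pop_sm κ s hfm
    have hsg := pop_semigroup (s := v) (t := s) (hcomp v s hv hs.le)
      (hinv (v+s) (by linarith)) hfm hf2
    have e1 : φ (v+s) = ∫ x, Pop κ v (Pop κ s f) x * f x ∂μ := by
      simp only [hφdef]
      refine integral_congr_ae (hsg.mono fun x hx => ?_)
      show Pop κ (v+s) f x * f x = Pop κ v (Pop κ s f) x * f x
      rw [hx]
    have int1 : Integrable (fun x => Pop κ v (Pop κ s f) x * f x) μ :=
      integrable_mul_L2 (hP2 _ hPsfm hPsf2 v hv) hf2
    have int2 : Integrable (fun x => Pop κ v f x * f x) μ :=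
      integrable_mul_L2 (hP2 f hfm hf2 v hv) hf2
    rw [e1]
    simp only [hφdef]
    rw [← integral_sub int1 int2]
    apply integral_congr_ae
    have hsub := pop_sub (hinv v hv) hPsfm hfm hPsf2 hf2
    refine hsub.mono fun x hx => ?_
    show Pop κ v (Pop κ s f) x * f x - Pop κ v f x * f x
      = Pop κ v (fun y => Pop κ s f y - f y) x * f x
    have hx' : Pop κ v (fun y => Pop κ s f y - f y) x
        = Pop κ v (Pop κ s f) x - Pop κ v f x := hx
    rw [hx']
    ring
  -- slope bound
  have hslope : ∀ t : ℝ, 0 ≤ t → ∀ s : ℝ, 0 < s →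
      |(φ (t + s) - φ t) / s - ψ t| ≤ N (D s) * N f := by
    intro t ht s hs
    have hPopDs2 : MemLp (Pop κ t (D s)) 2 μ := hP2 _ (hDm s) (hD2 s hs) t ht
    have e2 : φ (t+s) - φ t = s * (ψ t + ∫ x, Pop κ t (D s) x * f x ∂μ) := by
      rw [hId t ht s hs]
      have hfun : (fun y => Pop κ s f y - f y) = s • fun y => g y + D s y := by
        funext y
        rw [hD_eq s hs y]
        rfl
      rw [hfun, pop_smul]
      have hadd := pop_add (hinv t ht) hgm (hDm s) hg2 (hD2 s hs)
      have e3 : ∫ x, (s • Pop κ t (fun y => g y + D s y)) x * f x ∂μ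
          = ∫ x, s * (Pop κ t g x * f x + Pop κ t (D s) x * f x) ∂μ := by
        refine integral_congr_ae (hadd.mono fun x hx => ?_)
        have hx' : Pop κ t (fun y => g y + D s y) x
            = Pop κ t g x + Pop κ t (D s) x := hx
        show s * Pop κ t (fun y => g y + D s y) x * f x
          = s * (Pop κ t g x * f x + Pop κ t (D s) x * f x)
        rw [hx']
        ring
      rw [e3, MeasureTheory.integral_const_mul,
        integral_add (integrable_mul_L2 (hP2 g hgm hg2 t ht) hf2)
          (integrable_mul_L2 hPopDs2 hf2)]
    rw [e2]
    have e4 : s * (ψ t + ∫ x, Pop κ t (D s) x * f x ∂μ) / s - ψ t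
        = ∫ x, Pop κ t (D s) x * f x ∂μ := by
      field_simp
      ring
    rw [e4]
    calc |∫ x, Pop κ t (D s) x * f x ∂μ| ≤ N (Pop κ t (D s)) * N f :=
        abs_integral_mul_le hPopDs2 hf2
      _ ≤ N (D s) * N f :=
        mul_le_mul_of_nonneg_right (hPN _ (hDm s) (hD2 s hs) t ht) (hN_nonneg f)
  -- continuity modulus
  have hmod : ∀ v : ℝ, 0 ≤ v → ∀ s : ℝ, 0 < s →
      |φ (v + s) - φ v| ≤ N (fun x => Pop κ s f x - f x) * N f := by
    intro v hv s hs
    rw [hId v hv s hs]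
    have hu2 : MemLp (fun x => Pop κ s f x - f x) 2 μ := (hP2 f hfm hf2 s hs.le).sub hf2
    have hum : StronglyMeasurable (fun x => Pop κ s f x - f x) := (pop_sm κ s hfm).sub hfm
    calc |∫ x, Pop κ v (fun y => Pop κ s f y - f y) x * f x ∂μ|
        ≤ N (Pop κ v (fun y => Pop κ s f y - f y)) * N f :=
          abs_integral_mul_le (hP2 _ hum hu2 v hv) hf2
      _ ≤ N (fun x => Pop κ s f x - f x) * N f :=
          mul_le_mul_of_nonneg_right (hPN _ hum hu2 v hv) (hN_nonneg f)
  -- right derivative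
  have hDeriv : ∀ t : ℝ, 0 ≤ t → HasDerivWithinAt φ (ψ t) (Set.Ici t) t := by
    intro t ht
    rw [hasDerivWithinAt_iff_tendsto_slope, Set.Ici_sdiff_left]
    have hmap : Tendsto (fun u : ℝ => u - t) (𝓝[Set.Ioi t] t) (𝓝[Set.Ioi 0] (0:ℝ)) := by
      rw [tendsto_nhdsWithin_iff]
      constructor
      · have : Tendsto (fun u : ℝ => u - t) (𝓝 t) (𝓝 (t - t)) :=
          (continuous_sub_right t).tendsto t
        rw [sub_self] at this
        exact this.mono_left nhdsWithin_le_nhds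
      · filter_upwards [eventually_mem_nhdsWithin] with u hu
        exact sub_pos.mpr (Set.mem_Ioi.mp hu)
    have hb : Tendsto (fun u : ℝ => N (D (u - t)) * N f) (𝓝[Set.Ioi t] t) (𝓝 0) := by
      have := (hNε.comp hmap).mul_const (N f)
      simpa using this
    rw [tendsto_iff_dist_tendsto_zero]
    refine squeeze_zero' ?_ ?_ hb
    · filter_upwards with u
      exact dist_nonneg
    · filter_upwards [eventually_mem_nhdsWithin] with u hu
      have hs : 0 < u - t := sub_pos.mpr hu
      have h1 := hslope t ht (u - t) hs
      rw [add_sub_cancel] at h1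
      have h2 : slope φ t u = (φ u - φ t) / (u - t) := by
        rw [slope_def_field]
      rw [Real.dist_eq, h2]
      exact h1
  -- continuity on [0, T]
  have hNbound : ∀ s : ℝ, 0 < s →
      N (fun x => Pop κ s f x - f x) ≤ s * (N g + N (D s)) := by
    intro s hs
    have hfun : (fun x => Pop κ s f x - f x) = s • fun x => g x + D s x := by
      funext x
      rw [hD_eq s hs x]
      rfl
    rw [hfun]
    have h1 : N (s • fun x => g x + D s x) = |s| * N (fun x => g x + D s x) := N_smul s _
    rw [hNdef] at h1 ⊢
    rw [h1, abs_of_pos hs]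
    exact mul_le_mul_of_nonneg_left (N_add_le hg2 (hD2 s hs)) hs.le
  have hsmall : ∀ ε : ℝ, 0 < ε → ∃ δ : ℝ, 0 < δ ∧ ∀ s : ℝ, 0 < s → s < δ →
      N (fun x => Pop κ s f x - f x) ≤ ε := by
    intro ε hε
    have h1 : ∀ᶠ s in 𝓝[>] (0:ℝ), N (D s) < 1 := hNε.eventually (gt_mem_nhds one_pos)
    have hpos : 0 < ε / (N g + 1) := by positivity
    have h2 : ∀ᶠ s in 𝓝[>] (0:ℝ), s < ε / (N g + 1) :=
      eventually_nhdsWithin_of_eventually_nhds (eventually_lt_nhds hpos)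
    have h3 := h1.and h2
    rw [eventually_nhdsWithin_iff] at h3
    obtain ⟨δ, hδpos, hδ⟩ := Metric.eventually_nhds_iff.mp h3
    refine ⟨δ, hδpos, fun s hs hsδ => ?_⟩
    have hd : dist s 0 < δ := by
      rw [Real.dist_eq, sub_zero, abs_of_pos hs]
      exact hsδ
    obtain ⟨hD1, hsε⟩ := hδ hd hs
    calc N (fun x => Pop κ s f x - f x) ≤ s * (N g + N (D s)) := hNbound s hs
      _ ≤ s * (N g + 1) := by nlinarith
      _ ≤ ε / (N g + 1) * (N g + 1) := by nlinarith [hN_nonneg g]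
      _ = ε := by field_simp [show N g + 1 ≠ 0 by linarith [hN_nonneg g]]
  have hcont : ∀ T : ℝ, ContinuousOn φ (Set.Icc 0 T) := by
    intro T
    rw [Metric.continuousOn_iff]
    intro t ht ε hε
    have hε' : 0 < ε / (2 * (N f + 1)) := by positivity
    obtain ⟨δ, hδpos, hδ⟩ := hsmall _ hε'
    refine ⟨δ, hδpos, fun u hu hd => ?_⟩
    have hbound : ε / (2 * (N f + 1)) * N f < ε := by
      have h2 : (0:ℝ) < 2 * (N f + 1) := by positivity
      rw [div_mul_eq_mul_div, div_lt_iff₀ h2]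
      nlinarith [hN_nonneg f]
    rcases lt_trichotomy u t with hlt | heq | hgt
    · have hs : 0 < t - u := by linarith
      have hsδ : t - u < δ := by
        rw [Real.dist_eq] at hd
        cases abs_cases (u - t) with
        | inl h => linarith [h.1, hd]
        | inr h => linarith [h.1, hd]
      have h1 := hmod u hu.1 (t - u) hs
      rw [add_sub_cancel] at h1
      rw [Real.dist_eq, abs_sub_comm]
      calc |φ t - φ u| ≤ N (fun x => Pop κ (t - u) f x - f x) * N f := h1
        _ ≤ ε / (2 * (N f + 1)) * N f :=
            mul_le_mul_of_nonneg_right (hδ _ hs hsδ) (hN_nonneg f)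
        _ < ε := hbound
    · rw [heq]
      simpa using hε
    · have hs : 0 < u - t := by linarith
      have hsδ : u - t < δ := by
        rw [Real.dist_eq] at hd
        cases abs_cases (u - t) with
        | inl h => linarith [h.1, hd]
        | inr h => linarith [h.1, hd]
      have h1 := hmod t ht.1 (u - t) hs
      rw [add_sub_cancel] at h1
      rw [Real.dist_eq]
      calc |φ u - φ t| ≤ N (fun x => Pop κ (u - t) f x - f x) * N f := h1
        _ ≤ ε / (2 * (N f + 1)) * N f :=
            mul_le_mul_of_nonneg_right (hδ _ hs hsδ) (hN_nonneg f)
        _ < ε := hbound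
  -- ψ bound
  have hψb : ∀ t : ℝ, 0 ≤ t → |ψ t| ≤ Real.sqrt C * N g * N f * Real.exp (-(lV * t)) := by
    intro t ht
    have h1 : |ψ t| ≤ N (Pop κ t g) * N f :=
      abs_integral_mul_le (hP2 g hgm hg2 t ht) hf2
    have h2 := hdecay g hgm hg2 hgmean t ht
    have := mul_le_mul_of_nonneg_right h2 (hN_nonneg f)
    calc |ψ t| ≤ N (Pop κ t g) * N f := h1
      _ ≤ Real.sqrt C * Real.exp (-(lV * t)) * N g * N f := by nlinarith [hN_nonneg f]
      _ = Real.sqrt C * N g * N f * Real.exp (-(lV * t)) := by ring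
  -- FTC bound
  have hKnn : 0 ≤ Real.sqrt C * N g * N f :=
    mul_nonneg (mul_nonneg hsqrtC.le (hN_nonneg g)) (hN_nonneg f)
  have hFTC : ∀ T : ℝ, 0 ≤ T → |φ T - φ 0| ≤ Real.sqrt C * N g * N f / lV := by
    intro T hT
    set K := Real.sqrt C * N g * N f with hK
    have hB : ∀ x : ℝ, HasDerivAt (fun r : ℝ => K / lV * (1 - Real.exp (-(lV * r))))
        (K * Real.exp (-(lV * x))) x := by
      intro x
      have h1 : HasDerivAt (fun r : ℝ => -(lV * r)) (-lV) x := by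
        have h := ((hasDerivAt_id x).const_mul lV).neg
        simp only [mul_one] at h
        exact h
      have h2 : HasDerivAt (fun r : ℝ => Real.exp (-(lV * r)))
          (Real.exp (-(lV * x)) * -lV) x := (Real.hasDerivAt_exp _).comp x h1
      have h3 := (h2.const_sub 1).const_mul (K / lV)
      refine h3.congr_deriv ?_
      rw [div_mul_eq_mul_div, div_eq_iff hlV.ne']
      ring
    have hmain := image_norm_le_of_norm_deriv_right_le_deriv_boundary
      (f := fun r => φ r - φ 0) (a := 0) (b := T) (f' := ψ)
      (B := fun r : ℝ => K / lV * (1 - Real.exp (-(lV * r))))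
      (B' := fun r : ℝ => K * Real.exp (-(lV * r)))
      ((hcont T).sub continuousOn_const)
      (fun x hx => (hDeriv x hx.1).sub_const (φ 0))
      (by simp)
      hB
      (fun x hx => by
        rw [Real.norm_eq_abs]
        have := hψb x hx.1
        calc |ψ x| ≤ Real.sqrt C * N g * N f * Real.exp (-(lV * x)) := this
          _ = K * Real.exp (-(lV * x)) := by rw [hK])
    have hTmem : T ∈ Set.Icc (0:ℝ) T := Set.right_mem_Icc.mpr hT
    have h4 := hmain hTmem
    rw [Real.norm_eq_abs] at h4
    calc |φ T - φ 0| ≤ K / lV * (1 - Real.exp (-(lV * T))) := h4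
      _ ≤ K / lV * 1 := by
          refine mul_le_mul_of_nonneg_left ?_ (div_nonneg hKnn hlV.le)
          linarith [Real.exp_pos (-(lV * T))]
      _ = K / lV := mul_one _
  -- φ 0 = N f ^ 2
  have hφ0 : φ 0 = N f ^ 2 := by
    have hp : ∀ x, Pop κ 0 f x = f x := by
      intro x
      simp only [Pop, hzero x]
      exact integral_dirac' f x hfm
    have : φ 0 = ∫ x, f x ^ 2 ∂μ := by
      simp only [hφdef]
      congr 1
      funext x
      rw [hp x, sq]
    rw [this, integral_sq_eq hf2]
  -- final bound
  have hfinal : N f ^ 2 ≤ Real.sqrt C * N g * N f / lV := by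
    have hb : ∀ T : ℝ, 0 ≤ T →
        N f ^ 2 ≤ Real.sqrt C * Real.exp (-(lV * T)) * N f ^ 2 +
          Real.sqrt C * N g * N f / lV := by
      intro T hT
      have h1 : |φ T| ≤ Real.sqrt C * Real.exp (-(lV * T)) * N f ^ 2 := by
        have ha := abs_integral_mul_le (hP2 f hfm hf2 T hT) hf2
        have h2 := hdecay f hfm hf2 hmean T hT
        have h3 : N (Pop κ T f) * N f ≤ Real.sqrt C * Real.exp (-(lV * T)) * N f * N f :=
          mul_le_mul_of_nonneg_right h2 (hN_nonneg f)
        calc |φ T| ≤ N (Pop κ T f) * N f := ha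
          _ ≤ Real.sqrt C * Real.exp (-(lV * T)) * N f * N f := h3
          _ = Real.sqrt C * Real.exp (-(lV * T)) * N f ^ 2 := by ring
      have h5 := hFTC T hT
      calc N f ^ 2 = φ 0 := hφ0.symm
        _ ≤ |φ 0| := le_abs_self _
        _ ≤ |φ T| + |φ 0 - φ T| := by
            have := abs_add_le (φ T) (φ 0 - φ T)
            simpa using this
        _ ≤ Real.sqrt C * Real.exp (-(lV * T)) * N f ^ 2 +
            Real.sqrt C * N g * N f / lV := by
            refine add_le_add h1 ?_
            rw [abs_sub_comm]
            exact h5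
    have hexp0 : Tendsto (fun T : ℝ => Real.exp (-(lV * T))) atTop (𝓝 0) := by
      have h6 : Tendsto (fun T : ℝ => -(lV * T)) atTop atBot :=
        tendsto_neg_atTop_atBot.comp (Tendsto.const_mul_atTop hlV tendsto_id)
      exact Real.tendsto_exp_atBot.comp h6
    have hlim : Tendsto (fun T : ℝ => Real.sqrt C * Real.exp (-(lV * T)) * N f ^ 2 +
        Real.sqrt C * N g * N f / lV) atTop
        (𝓝 (Real.sqrt C * 0 * N f ^ 2 + Real.sqrt C * N g * N f / lV)) :=
      (((hexp0.const_mul (Real.sqrt C)).mul_const (N f ^ 2)).add_const _)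
    rw [mul_zero, zero_mul, zero_add] at hlim
    refine ge_of_tendsto hlim ?_
    filter_upwards [eventually_ge_atTop (0:ℝ)] with T hT
    exact hb T hT
  -- conclude
  have hNfr : (eLpNorm f 2 μ).toReal = N f := rfl
  have hNgr : (eLpNorm g 2 μ).toReal = N g := rfl
  rw [hNfr, hNgr]
  by_cases hNf : N f = 0
  · rw [hNf, mul_zero]
    exact hN_nonneg g
  · have hNfpos : 0 < N f := lt_of_le_of_ne (hN_nonneg f) (Ne.symm hNf)
    rw [pow_two] at hfinal
    have h1 : N f ≤ Real.sqrt C * N g / lV := by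
      have h2 : N f * N f ≤ (Real.sqrt C * N g / lV) * N f := by
        have h3 : Real.sqrt C * N g * N f / lV = (Real.sqrt C * N g / lV) * N f := by ring
        linarith [hfinal, h3.symm.le]
      exact le_of_mul_le_mul_right h2 hNfpos
    rw [div_mul_eq_mul_div, div_le_iff₀ hsqrtC]
    calc lV * N f ≤ lV * (Real.sqrt C * N g / lV) := mul_le_mul_of_nonneg_left h1 hlV.le
      _ = N g * Real.sqrt C := by field_simp
end PoincareAux


open PoincareAux in
/-- **(H2′) implies (H2).**  If a Markov semigroup with invariant probability measure `μ`
satisfies the exponential variance decay `Var_μ(P_t f) ≤ C e^{-2λ_V t} Var_μ(f)`, then the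
iterated Poincaré inequality holds with constant `λ_I = C^{-1/2} λ_V`: for every `f` in the
domain of the generator `ℒ` with `μ(f) = 0`, `‖ℒf‖_{L²(μ)} ≥ C^{-1/2} λ_V ‖f‖_{L²(μ)}`. -/
theorem iterated_poincare_of_variance_decay
    {d : ℕ} (κ : ℝ → Kernel (EuclideanSpace ℝ (Fin d)) (EuclideanSpace ℝ (Fin d)))
    (hMark : ∀ t : ℝ, IsMarkovKernel (κ t))
    (hzero : ∀ x, κ 0 x = Measure.dirac x)
    (hcomp : ∀ s t : ℝ, 0 ≤ s → 0 ≤ t → ∀ x, κ (s + t) x = (κ s x).bind (κ t))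
    (μ : Measure (EuclideanSpace ℝ (Fin d))) [IsProbabilityMeasure μ]
    (hinv : ∀ t : ℝ, 0 ≤ t → μ.bind (κ t) = μ)
    (C lV : ℝ) (hC : 1 ≤ C) (hlV : 0 < lV)
    (H2' : ∀ f : EuclideanSpace ℝ (Fin d) → ℝ, MemLp f 2 μ → ∀ t : ℝ, 0 ≤ t →
      ∫ x, (Pop κ t f x - ∫ y, Pop κ t f y ∂μ) ^ 2 ∂μ ≤
        C * Real.exp (-(2 * lV * t)) * ∫ x, (f x - ∫ y, f y ∂μ) ^ 2 ∂μ) :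
    ∀ f g : EuclideanSpace ℝ (Fin d) → ℝ, IsGenerated κ μ f g → ∫ x, f x ∂μ = 0 →
      ENNReal.ofReal (lV / Real.sqrt C) * eLpNorm f 2 μ ≤ eLpNorm g 2 μ := by
  intro f g hgen hmean
  obtain ⟨hf2, hg2, htend⟩ := hgen
  haveI hM : ∀ t : ℝ, IsMarkovKernel (κ t) := hMark
  set f₁ := hf2.1.mk f with hf1def
  set g₁ := hg2.1.mk g with hg1def
  have hf1m : StronglyMeasurable f₁ := hf2.1.stronglyMeasurable_mk
  have hg1m : StronglyMeasurable g₁ := hg2.1.stronglyMeasurable_mk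
  have hfe : f =ᵐ[μ] f₁ := hf2.1.ae_eq_mk
  have hge : g =ᵐ[μ] g₁ := hg2.1.ae_eq_mk
  have hf12 : MemLp f₁ 2 μ := hf2.ae_eq hfe
  have hg12 : MemLp g₁ 2 μ := hg2.ae_eq hge
  have htend1 : Tendsto (fun t : ℝ => eLpNorm (fun x => (Pop κ t f₁ x - f₁ x) / t - g₁ x) 2 μ)
      (𝓝[>] (0:ℝ)) (𝓝 0) := by
    refine htend.congr' ?_
    filter_upwards [eventually_mem_nhdsWithin] with t ht
    refine eLpNorm_congr_ae ?_
    filter_upwards [pop_congr_ae (κ := κ) (hinv t (le_of_lt ht)) hfe, hfe, hge]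
      with x h1 h2 h3
    rw [h1, h2, h3]
  have hmean1 : ∫ x, f₁ x ∂μ = 0 := by
    rw [← integral_congr_ae hfe]
    exact hmean
  have hcore := core κ hMark hzero hcomp μ hinv C lV hC hlV H2' f₁ g₁ hf1m hg1m hf12 hg12
    htend1 hmean1
  have hef : eLpNorm f 2 μ = eLpNorm f₁ 2 μ := eLpNorm_congr_ae hfe
  have heg : eLpNorm g 2 μ = eLpNorm g₁ 2 μ := eLpNorm_congr_ae hge
  rw [hef, heg]
  have hlVC : 0 ≤ lV / Real.sqrt C := by positivity
  rw [← ENNReal.ofReal_toReal hf12.2.ne, ← ENNReal.ofReal_toReal hg12.2.ne,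
    ← ENNReal.ofReal_mul hlVC]
  exact ENNReal.ofReal_le_ofReal hcore
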